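/- Let Ω = {1, …, d} and let f : 2^Ω → ℝ be a submodular set function with |f(S)| ≤ M for every S ⊆ Ω. Then its multilinear extension F : [0,1]^d → ℝ is (2M√d)-Lipschitz with respect to the Euclidean norm: |F(x) − F(y)| ≤ 2M√d·‖x − y‖ for all x, y ∈ [0,1]^d. -/

import Mathlib

open Finset

/-- The multilinear extension of a set function `f : 2^{[d]} → ℝ`:
`F(x) = Σ_{S ⊆ [d]} f(S) · Π_{i ∈ S} x_i · Π_{j ∉ S} (1 − x_j)`. -/
noncomputable def multilinearExt {d : ℕ} (f : Finset (Fin d) → ℝ)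
    (x : EuclideanSpace ℝ (Fin d)) : ℝ :=
  ∑ S : Finset (Fin d), f S * (∏ i ∈ S, x i) * ∏ j ∈ Sᶜ, (1 - x j)

lemma weight_sum {d : ℕ} (x : EuclideanSpace ℝ (Fin d)) :
    ∑ S : Finset (Fin d), (∏ i ∈ S, x i) * ∏ j ∈ Sᶜ, (1 - x j) = 1 := by
  have h := Finset.prod_add (fun i => x i) (fun i => 1 - (x i)) Finset.univ
  simp only [add_sub_cancel, Finset.prod_const_one] at h
  rw [Finset.powerset_univ] at h
  simp only [Finset.compl_eq_univ_sdiff]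
  exact h.symm

lemma mle_abs_le {d : ℕ} (f : Finset (Fin d) → ℝ) (M : ℝ)
    (hbound : ∀ S : Finset (Fin d), |f S| ≤ M)
    (x : EuclideanSpace ℝ (Fin d)) (hx : ∀ i, x i ∈ Set.Icc (0 : ℝ) 1) :
    |multilinearExt f x| ≤ M := by
  have hw : ∀ S : Finset (Fin d), 0 ≤ (∏ i ∈ S, x i) * ∏ j ∈ Sᶜ, (1 - x j) := by
    intro S
    apply mul_nonneg
    · exact Finset.prod_nonneg fun i _ => (hx i).1
    · exact Finset.prod_nonneg fun j _ => by linarith [(hx j).2]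
  calc |multilinearExt f x|
      ≤ ∑ S : Finset (Fin d), |f S * (∏ i ∈ S, x i) * ∏ j ∈ Sᶜ, (1 - x j)| :=
        Finset.abs_sum_le_sum_abs _ _
    _ ≤ ∑ S : Finset (Fin d), M * ((∏ i ∈ S, x i) * ∏ j ∈ Sᶜ, (1 - x j)) := by
        refine Finset.sum_le_sum fun S _ => ?_
        rw [mul_assoc, abs_mul, abs_of_nonneg (hw S)]
        exact mul_le_mul_of_nonneg_right (hbound S) (hw S)
    _ = M := by rw [← Finset.mul_sum, weight_sum, mul_one]

lemma mle_update {d : ℕ} (f : Finset (Fin d) → ℝ)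
    (z : EuclideanSpace ℝ (Fin d)) (i : Fin d) (t : ℝ) :
    multilinearExt f (WithLp.toLp 2 (Function.update z i t))
      = t * multilinearExt f (WithLp.toLp 2 (Function.update z i 1))
        + (1 - t) * multilinearExt f (WithLp.toLp 2 (Function.update z i 0)) := by
  unfold multilinearExt
  simp only [WithLp.ofLp_toLp]
  rw [Finset.mul_sum, Finset.mul_sum, ← Finset.sum_add_distrib]
  refine Finset.sum_congr rfl fun S _ => ?_
  by_cases hi : i ∈ S
  · have h1 : ∀ s : ℝ, ∏ j ∈ S, (Function.update z i s) j = s * ∏ j ∈ S.erase i, z j := by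
      intro s
      rw [← Finset.mul_prod_erase _ _ hi, Function.update_self]
      congr 1
      exact Finset.prod_congr rfl fun j hj =>
        Function.update_of_ne (Finset.ne_of_mem_erase hj) _ _
    have h2 : ∀ s : ℝ, ∏ j ∈ Sᶜ, (1 - (Function.update z i s) j) = ∏ j ∈ Sᶜ, (1 - z j) := by
      intro s
      refine Finset.prod_congr rfl fun j hj => ?_
      have : j ≠ i := fun h => (Finset.mem_compl.mp hj) (h ▸ hi)
      rw [Function.update_of_ne this]
    rw [h1, h1, h1, h2, h2, h2]; ring
  · have hic : i ∈ Sᶜ := Finset.mem_compl.mpr hi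
    have h1 : ∀ s : ℝ, ∏ j ∈ S, (Function.update z i s) j = ∏ j ∈ S, z j := by
      intro s
      refine Finset.prod_congr rfl fun j hj => ?_
      have : j ≠ i := fun h => hi (h ▸ hj)
      rw [Function.update_of_ne this]
    have h2 : ∀ s : ℝ, ∏ j ∈ Sᶜ, (1 - (Function.update z i s) j)
        = (1 - s) * ∏ j ∈ Sᶜ.erase i, (1 - z j) := by
      intro s
      rw [← Finset.mul_prod_erase _ _ hic, Function.update_self]
      congr 1
      exact Finset.prod_congr rfl fun j hj =>
        by rw [Function.update_of_ne (Finset.ne_of_mem_erase hj)]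
    rw [h1, h1, h1, h2, h2, h2]; ring

lemma mle_update_diff {d : ℕ} (f : Finset (Fin d) → ℝ) (M : ℝ)
    (hbound : ∀ S : Finset (Fin d), |f S| ≤ M)
    (z : EuclideanSpace ℝ (Fin d)) (hz : ∀ j, z j ∈ Set.Icc (0 : ℝ) 1)
    (i : Fin d) (s t : ℝ) :
    |multilinearExt f (WithLp.toLp 2 (Function.update z i s)) - multilinearExt f (WithLp.toLp 2 (Function.update z i t))|
      ≤ 2 * M * |s - t| := by
  have hcube : ∀ c : ℝ, c ∈ Set.Icc (0:ℝ) 1 →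
      ∀ j, (WithLp.toLp 2 (Function.update z i c) : EuclideanSpace ℝ (Fin d)) j ∈ Set.Icc (0 : ℝ) 1 := by
    intro c hc j
    by_cases h : j = i
    · subst h; rw [WithLp.ofLp_toLp, Function.update_self]; exact hc
    · rw [WithLp.ofLp_toLp, Function.update_of_ne h]; exact hz j
  have hA := mle_abs_le f M hbound _ (hcube 1 (by norm_num))
  have hB := mle_abs_le f M hbound _ (hcube 0 (by norm_num))
  rw [mle_update f z i s, mle_update f z i t]
  set A := multilinearExt f (WithLp.toLp 2 (Function.update z i 1))
  set B := multilinearExt f (WithLp.toLp 2 (Function.update z i 0))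
  have : s * A + (1 - s) * B - (t * A + (1 - t) * B) = (s - t) * (A - B) := by ring
  rw [this, abs_mul, mul_comm (2 * M)]
  apply mul_le_mul_of_nonneg_left _ (abs_nonneg _)
  calc |A - B| ≤ |A| + |B| := abs_sub _ _
    _ ≤ 2 * M := by linarith

theorem multilinear_extension_lipschitz
    (d : ℕ) (hd : 1 ≤ d) (f : Finset (Fin d) → ℝ) (M : ℝ)
    (hsub : ∀ A B : Finset (Fin d), A ⊆ B → ∀ x ∉ B,
      f (insert x B) - f B ≤ f (insert x A) - f A)
    (hbound : ∀ S : Finset (Fin d), |f S| ≤ M) :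
    ∀ x y : EuclideanSpace ℝ (Fin d),
      (∀ i, x i ∈ Set.Icc (0 : ℝ) 1) → (∀ i, y i ∈ Set.Icc (0 : ℝ) 1) →
      |multilinearExt f x - multilinearExt f y| ≤ 2 * M * Real.sqrt d * ‖x - y‖ := by
  intro x y hx hy
  have hM : 0 ≤ M := le_trans (abs_nonneg _) (hbound ∅)
  -- interpolation sequence
  set z : ℕ → EuclideanSpace ℝ (Fin d) :=
    fun k => WithLp.toLp 2 (fun (i : Fin d) => if (i : ℕ) < k then y i else x i) with hzdef
  have hz0 : z 0 = x := by refine PiLp.ext fun i => ?_; simp [hzdef]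
  have hzd : z d = y := by refine PiLp.ext fun i => ?_; simp [hzdef, i.isLt]
  have hzcube : ∀ k j, z k j ∈ Set.Icc (0 : ℝ) 1 := by
    intro k j
    by_cases h : (j : ℕ) < k
    · simp only [hzdef, WithLp.ofLp_toLp, if_pos h]; exact hy j
    · simp only [hzdef, WithLp.ofLp_toLp, if_neg h]; exact hx j
  have hstep : ∀ k (hk : k < d),
      |multilinearExt f (z (k + 1)) - multilinearExt f (z k)|
        ≤ 2 * M * |y ⟨k, hk⟩ - x ⟨k, hk⟩| := by
    intro k hk
    set i : Fin d := ⟨k, hk⟩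
    have h1 : z k = WithLp.toLp 2 (Function.update (z k) i (x i)) := by
      refine PiLp.ext fun j => ?_
      by_cases h : j = i
      · subst h; simp only [WithLp.ofLp_toLp]; rw [Function.update_self]; simp [hzdef, i]
      · simp only [WithLp.ofLp_toLp]; rw [Function.update_of_ne h]
    have h2 : z (k + 1) = WithLp.toLp 2 (Function.update (z k) i (y i)) := by
      refine PiLp.ext fun j => ?_
      by_cases h : j = i
      · subst h; simp only [WithLp.ofLp_toLp]; rw [Function.update_self]; simp [hzdef, i]
      · simp only [WithLp.ofLp_toLp]; rw [Function.update_of_ne h]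
        have hji : (j : ℕ) ≠ k := fun hc => h (Fin.ext hc)
        simp only [hzdef, WithLp.ofLp_toLp]
        by_cases hj : (j : ℕ) < k
        · rw [if_pos hj, if_pos (by omega)]
        · rw [if_neg hj, if_neg (by omega)]
    have hd := mle_update_diff f M hbound (z k) (hzcube k) i (y i) (x i)
    rwa [← h1, ← h2] at hd
  have htel : multilinearExt f y - multilinearExt f x
      = ∑ k ∈ Finset.range d, (multilinearExt f (z (k + 1)) - multilinearExt f (z k)) := by
    rw [Finset.sum_range_sub (fun k => multilinearExt f (z k)), hz0, hzd]
  have hmain : |multilinearExt f x - multilinearExt f y|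
      ≤ 2 * M * ∑ i : Fin d, |x i - y i| := by
    rw [abs_sub_comm, htel]
    calc |∑ k ∈ Finset.range d, (multilinearExt f (z (k + 1)) - multilinearExt f (z k))|
        ≤ ∑ k ∈ Finset.range d,
            |multilinearExt f (z (k + 1)) - multilinearExt f (z k)| :=
          Finset.abs_sum_le_sum_abs _ _
      _ ≤ ∑ k ∈ Finset.range d,
            (2 * M * (if h : k < d then |x ⟨k, h⟩ - y ⟨k, h⟩| else 0)) := by
          refine Finset.sum_le_sum fun k hk => ?_
          have hk' : k < d := Finset.mem_range.mp hk
          rw [dif_pos hk']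
          rw [abs_sub_comm (x _)]
          exact hstep k hk'
      _ = 2 * M * ∑ i : Fin d, |x i - y i| := by
          rw [← Finset.mul_sum]
          congr 1
          rw [← Fin.sum_univ_eq_sum_range (fun k => if h : k < d then |x ⟨k, h⟩ - y ⟨k, h⟩| else 0)]
          exact Finset.sum_congr rfl fun i _ => by simp [i.isLt]
  refine hmain.trans ?_
  rw [mul_assoc (2 * M)]
  apply mul_le_mul_of_nonneg_left _ (by positivity)
  -- Cauchy-Schwarz
  have hnorm : ‖x - y‖ = Real.sqrt (∑ i : Fin d, (x i - y i) ^ 2) := by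
    rw [EuclideanSpace.norm_eq]
    congr 1
    refine Finset.sum_congr rfl fun i _ => ?_
    simp [Real.norm_eq_abs, sq_abs]
  rw [hnorm, ← Real.sqrt_mul (by positivity)]
  rw [Real.le_sqrt (Finset.sum_nonneg fun i _ => abs_nonneg _)]
  calc (∑ i : Fin d, |x i - y i|) ^ 2
      ≤ (Finset.univ.card : ℝ) * ∑ i : Fin d, |x i - y i| ^ 2 :=
        sq_sum_le_card_mul_sum_sq
    _ = (d : ℝ) * ∑ i : Fin d, (x i - y i) ^ 2 := by
        simp [sq_abs]
  positivity
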